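/- Let (X,d) be a metric space, T a self-mapping of X, and C_{x₀,r} = {x ∈ X : d(x₀,x) = r} a circle in X that is a fixed circle of T (i.e., Tx = x for every x ∈ C_{x₀,r}). Then for every x ∈ C_{x₀,r}, T is continuous at x if and only if M₁(z,x) → 0 as z → x (equivalently, T is discontinuous at x if and only if the limit of M₁(z,x) as z → x is not 0). -/

import Mathlib

/-- The number `M₁(x,y)` associated to a self-mapping `T` of a metric space. -/
noncomputable def M1 {X : Type*} [MetricSpace X] (T : X → X) (x y : X) : ℝ :=
  max (max (max (dist x y) (dist x (T x)))
      (max (dist y (T y)) (dist x (T x) * dist y (T y) / (1 + dist x y))))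
    (dist x (T x) * dist y (T y) / (1 + dist (T x) (T y)))

theorem stmt_10 {X : Type*} [MetricSpace X] (T : X → X) (x₀ : X) (r : ℝ) (hr : 0 < r)
    (hfix : ∀ x : X, dist x₀ x = r → T x = x) :
    ∀ x : X, dist x₀ x = r →
      (ContinuousAt T x ↔
        Filter.Tendsto (fun z : X => M1 T z x) (nhds x) (nhds 0)) := by
  intro x hx
  have hTx : T x = x := hfix x hx
  have hM : ∀ z : X, M1 T z x = max (dist z x) (dist z (T z)) := by
    intro z
    simp only [M1, hTx, dist_self, mul_zero, zero_div, max_self]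
    rw [max_eq_left (le_max_of_le_left dist_nonneg), max_eq_left (le_max_of_le_left dist_nonneg)]
  constructor
  · intro hc
    have hT : Filter.Tendsto T (nhds x) (nhds x) := by
      simpa [ContinuousAt, hTx] using hc
    have h1 : Filter.Tendsto (fun z : X => dist z x) (nhds x) (nhds 0) := by
      simpa using tendsto_iff_dist_tendsto_zero.mp (Filter.tendsto_id (x := nhds x))
    have h2 : Filter.Tendsto (fun z : X => dist (T z) x) (nhds x) (nhds 0) :=
      tendsto_iff_dist_tendsto_zero.mp hT
    have h3 : Filter.Tendsto (fun z : X => dist z (T z)) (nhds x) (nhds 0) := by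
      apply squeeze_zero (fun z => dist_nonneg)
        (fun z => dist_triangle z x (T z) |>.trans (by rw [dist_comm x (T z)]))
      simpa using h1.add h2
    simp only [hM]
    have := h1.max h3
    simpa using this
  · intro h
    have hle : ∀ z : X, dist (T z) x ≤ M1 T z x + dist z x := by
      intro z
      calc dist (T z) x ≤ dist (T z) z + dist z x := dist_triangle _ _ _
        _ ≤ M1 T z x + dist z x := by
            rw [dist_comm (T z) z]
            exact add_le_add (show dist z (T z) ≤ M1 T z x by rw [hM]; exact le_max_right _ _) le_rfl
    have h1 : Filter.Tendsto (fun z : X => dist z x) (nhds x) (nhds 0) := by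
      simpa using tendsto_iff_dist_tendsto_zero.mp (Filter.tendsto_id (x := nhds x))
    have h2 : Filter.Tendsto (fun z : X => dist (T z) x) (nhds x) (nhds 0) :=
      squeeze_zero (fun z => dist_nonneg) hle (by simpa using h.add h1)
    have : Filter.Tendsto T (nhds x) (nhds x) := tendsto_iff_dist_tendsto_zero.mpr h2
    simpa [ContinuousAt, hTx] using this
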